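/- Suppose there exist constants α ∈ (0,1) and B > 0 such that P(|η(X) − Q(η,1−u₀)| ≤ t) ≤ B·t^{α/(1−α)} for all t ≥ 0 (low-noise condition at the quantile). Then for every scoring function s (with mass-constrained top set C_s of μ-measure u₀), E[1_{C_s Δ C*_{u₀}}(X)] ≤ c·(L(s) − L*_{u₀})^{α} for some constant c depending only on α and B. -/

import Mathlib

open MeasureTheory Set

namespace LocalRanking

variable {Ω 𝒳 : Type*} [MeasurableSpace Ω] [MeasurableSpace 𝒳]

/-- The generalized-inverse `v`-quantile of a distribution `μ` on `ℝ`: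
`Q(μ, v) = inf {t : F(t) ≥ v}`. -/
noncomputable def quantile (μ : Measure ℝ) (v : ℝ) : ℝ :=
  sInf {t : ℝ | v ≤ (μ (Iic t)).toReal}

/-- Classification error `P(Y ≠ g(X))` of the classifier `g = 2·1_C − 1` built from a set `C`. -/
noncomputable def errSet (P : Measure Ω) (X : Ω → 𝒳) (Y : Ω → ℝ) (C : Set 𝒳) : ℝ :=
  (P {ω | (Y ω = 1 ∧ X ω ∉ C) ∨ (Y ω = -1 ∧ X ω ∈ C)}).toReal

private lemma toReal_union_disjoint (P : Measure Ω) [IsFiniteMeasure P] {S T : Set Ω}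
    (hT : MeasurableSet T) (hd : Disjoint S T) :
    (P (S ∪ T)).toReal = (P S).toReal + (P T).toReal := by
  rw [measure_union hd hT, ENNReal.toReal_add (measure_ne_top P S) (measure_ne_top P T)]

/-- Under the low-noise condition
`P(|η(X) − Q(η,1−u₀)| ≤ t) ≤ B·t^{α/(1−α)}` for all `t ≥ 0`, there is a constant `c > 0`
(depending only on `α` and `B`) such that for every mass-constrained scoring function `s`,
`E[1_{C_s Δ C*_{u₀}}(X)] ≤ c·(L(s) − L*_{u₀})^α`. -/
theorem low_noise_variance_control
    (P : Measure Ω) [IsProbabilityMeasure P]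
    (X : Ω → 𝒳) (Y : Ω → ℝ) (η : 𝒳 → ℝ)
    (hX : Measurable X) (hY : Measurable Y) (hηm : Measurable η)
    (hYval : ∀ ω, Y ω = 1 ∨ Y ω = -1)
    (hηbd : ∀ x, η x ∈ Icc (0 : ℝ) 1)
    (hη : ∀ A : Set 𝒳, MeasurableSet A →
      (P {ω | X ω ∈ A ∧ Y ω = 1}).toReal = ∫ x in A, η x ∂(P.map X))
    (u₀ q : ℝ) (hu₀ : u₀ ∈ Ioo (0 : ℝ) 1)
    (hq : q = quantile (P.map fun ω => η (X ω)) (1 - u₀))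
    (hmass_star : ((P.map X) {x | q ≤ η x}).toReal = u₀)
    (α B : ℝ) (hα : α ∈ Ioo (0 : ℝ) 1) (hB : 0 < B)
    -- low-noise condition at the quantile
    (hnoise : ∀ t : ℝ, 0 ≤ t →
      ((P.map X) {x | |η x - q| ≤ t}).toReal ≤ B * t ^ (α / (1 - α))) :
    ∃ c : ℝ, 0 < c ∧
      ∀ s : 𝒳 → ℝ, Measurable s →
        ((P.map X) {x | quantile (P.map fun ω => s (X ω)) (1 - u₀) ≤ s x}).toReal = u₀ →
        ((P.map X)
            (symmDiff {x | quantile (P.map fun ω => s (X ω)) (1 - u₀) ≤ s x}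
              {x | q ≤ η x})).toReal ≤
          c * (errSet P X Y {x | quantile (P.map fun ω => s (X ω)) (1 - u₀) ≤ s x}
                - errSet P X Y {x | q ≤ η x}) ^ α := by
  set μ : Measure 𝒳 := P.map X with hμ
  haveI hμprob : IsProbabilityMeasure μ := Measure.isProbabilityMeasure_map hX.aemeasurable
  obtain ⟨hα0, hα1⟩ := hα
  have hα1' : (0:ℝ) < 1 - α := by linarith
  -- integrability of η and |η - q|
  have hηint : Integrable η μ := by
    refine Integrable.mono' (integrable_const (1:ℝ)) hηm.aestronglyMeasurable ?_
    filter_upwards with x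
    rw [Real.norm_eq_abs, abs_of_nonneg (hηbd x).1]
    exact (hηbd x).2
  have hfint : Integrable (fun x => |η x - q|) μ := (hηint.sub (integrable_const q)).abs
  -- measurability of the Bayes set
  have hCstar : MeasurableSet {x | q ≤ η x} := measurableSet_le measurable_const hηm
  -- error formula: errSet A = P(Y=1) + μ(A) - 2 ∫_A η, for measurable A
  have errFormula : ∀ A : Set 𝒳, MeasurableSet A →
      errSet P X Y A = (P (Y ⁻¹' {1})).toReal + (μ A).toReal - 2 * ∫ x in A, η x ∂μ := by
    intro A hA
    have h1 : (P (Y ⁻¹' {1} ∩ X ⁻¹' A)).toReal = ∫ x in A, η x ∂μ := by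
      rw [← hη A hA]
      have : {ω | X ω ∈ A ∧ Y ω = 1} = Y ⁻¹' {1} ∩ X ⁻¹' A := by
        ext ω; simp [mem_preimage, and_comm]
      rw [this]
    have h2 : (P (X ⁻¹' A)).toReal = (μ A).toReal := by rw [hμ, Measure.map_apply hX hA]
    have m1 : MeasurableSet (Y ⁻¹' {1} ∩ X ⁻¹' A) :=
      (hY (measurableSet_singleton 1)).inter (hX hA)
    have m2 : MeasurableSet (Y ⁻¹' {-1} ∩ X ⁻¹' A) :=
      (hY (measurableSet_singleton (-1))).inter (hX hA)
    have m3 : MeasurableSet (Y ⁻¹' {1} ∩ (X ⁻¹' A)ᶜ) :=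
      (hY (measurableSet_singleton 1)).inter (hX hA).compl
    have part1 : X ⁻¹' A = (Y ⁻¹' {1} ∩ X ⁻¹' A) ∪ (Y ⁻¹' {-1} ∩ X ⁻¹' A) := by
      ext ω; simp only [mem_preimage, mem_union, mem_inter_iff, mem_singleton_iff]
      rcases hYval ω with h | h <;> simp [h] <;> norm_num
    have dis1 : Disjoint (Y ⁻¹' {1} ∩ X ⁻¹' A) (Y ⁻¹' {-1} ∩ X ⁻¹' A) := by
      rw [Set.disjoint_left]
      rintro ω ⟨ha, -⟩ ⟨hb, -⟩
      simp only [mem_preimage, mem_singleton_iff] at ha hb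
      rw [ha] at hb; norm_num at hb
    have part2 : Y ⁻¹' {1} = (Y ⁻¹' {1} ∩ X ⁻¹' A) ∪ (Y ⁻¹' {1} ∩ (X ⁻¹' A)ᶜ) := by
      ext ω; by_cases h : X ω ∈ A <;> simp [h]
    have dis2 : Disjoint (Y ⁻¹' {1} ∩ X ⁻¹' A) (Y ⁻¹' {1} ∩ (X ⁻¹' A)ᶜ) := by
      rw [Set.disjoint_left]
      rintro ω ⟨-, ha⟩ ⟨-, hb⟩
      exact hb ha
    have e1 : (P (X ⁻¹' A)).toReal
        = (P (Y ⁻¹' {1} ∩ X ⁻¹' A)).toReal + (P (Y ⁻¹' {-1} ∩ X ⁻¹' A)).toReal := by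
      conv_lhs => rw [part1]
      exact toReal_union_disjoint P m2 dis1
    have e2 : (P (Y ⁻¹' {1})).toReal
        = (P (Y ⁻¹' {1} ∩ X ⁻¹' A)).toReal + (P (Y ⁻¹' {1} ∩ (X ⁻¹' A)ᶜ)).toReal := by
      conv_lhs => rw [part2]
      exact toReal_union_disjoint P m3 dis2
    have eset : {ω | (Y ω = 1 ∧ X ω ∉ A) ∨ (Y ω = -1 ∧ X ω ∈ A)}
        = (Y ⁻¹' {1} ∩ (X ⁻¹' A)ᶜ) ∪ (Y ⁻¹' {-1} ∩ X ⁻¹' A) := by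
      ext ω; simp [mem_preimage]
    have e3 : errSet P X Y A
        = (P (Y ⁻¹' {1} ∩ (X ⁻¹' A)ᶜ)).toReal + (P (Y ⁻¹' {-1} ∩ X ⁻¹' A)).toReal := by
      rw [errSet, eset]
      refine toReal_union_disjoint P m2 ?_
      rw [Set.disjoint_left]
      rintro ω ⟨ha, -⟩ ⟨hb, -⟩
      simp only [mem_preimage, mem_singleton_iff] at ha hb
      rw [ha] at hb; norm_num at hb
    rw [e3]
    rw [h2] at e1
    rw [← h1]
    linarith
  -- the symmetric difference integral identity, for measurable C of mass u₀
  refine ⟨(2 * B) ^ (1 - α), Real.rpow_pos_of_pos (by linarith) _, ?_⟩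
  intro s hs hmass
  set Q0 : ℝ := quantile (P.map fun ω => s (X ω)) (1 - u₀) with hQ0
  set C : Set 𝒳 := {x | Q0 ≤ s x} with hCdef
  set Cs : Set 𝒳 := {x | q ≤ η x} with hCsdef
  have hC : MeasurableSet C := measurableSet_le measurable_const hs
  set D : Set 𝒳 := symmDiff C Cs with hDdef
  have hDeq : D = (C \ Cs) ∪ (Cs \ C) := by rw [hDdef, Set.symmDiff_def]
  have hD : MeasurableSet D := by
    rw [hDeq]; exact (hC.diff hCstar).union (hCstar.diff hC)
  -- split integrals along an arbitrary measurable set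
  have hsplit : ∀ A T : Set 𝒳, MeasurableSet A → MeasurableSet T →
      ∫ x in A, η x ∂μ = (∫ x in A ∩ T, η x ∂μ) + ∫ x in A \ T, η x ∂μ := by
    intro A T hA hT
    rw [← setIntegral_union (Set.disjoint_sdiff_right.mono_left Set.inter_subset_right)
        (hA.diff hT) hηint.integrableOn hηint.integrableOn, Set.inter_union_diff]
  have hsplitC : ∫ x in C, η x ∂μ = (∫ x in C ∩ Cs, η x ∂μ) + ∫ x in C \ Cs, η x ∂μ :=
    hsplit C Cs hC hCstar
  have hsplitCs : ∫ x in Cs, η x ∂μ = (∫ x in C ∩ Cs, η x ∂μ) + ∫ x in Cs \ C, η x ∂μ := by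
    rw [hsplit Cs C hCstar hC, Set.inter_comm]
  -- equal masses of the two "wings"
  have hmassC : (μ C).toReal = u₀ := hmass
  have hmassCs : (μ Cs).toReal = u₀ := hmass_star
  have hwings : (μ (C \ Cs)).toReal = (μ (Cs \ C)).toReal := by
    have h1 : (μ (C ∩ Cs)).toReal + (μ (C \ Cs)).toReal = (μ C).toReal := by
      rw [← ENNReal.toReal_add (measure_ne_top μ _) (measure_ne_top μ _),
        measure_inter_add_diff C hCstar]
    have h2 : (μ (C ∩ Cs)).toReal + (μ (Cs \ C)).toReal = (μ Cs).toReal := by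
      rw [← ENNReal.toReal_add (measure_ne_top μ _) (measure_ne_top μ _), Set.inter_comm,
        measure_inter_add_diff Cs hC]
    rw [hmassC] at h1; rw [hmassCs] at h2; linarith
  -- signed integral identities on the wings
  have hconst : ∀ A : Set 𝒳, ∫ x in A, (η x - q) ∂μ = (∫ x in A, η x ∂μ) - q * (μ A).toReal := by
    intro A
    rw [integral_sub hηint.integrableOn (integrable_const q).integrableOn, setIntegral_const,
      smul_eq_mul, Measure.real]
    ring
  have hsign1 : ∫ x in Cs \ C, (η x - q) ∂μ = ∫ x in Cs \ C, |η x - q| ∂μ := by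
    refine setIntegral_congr_fun (hCstar.diff hC) (fun x hx => ?_)
    have : q ≤ η x := hx.1
    rw [abs_of_nonneg (by linarith)]
  have hsign2 : ∫ x in C \ Cs, (q - η x) ∂μ = ∫ x in C \ Cs, |η x - q| ∂μ := by
    refine setIntegral_congr_fun (hC.diff hCstar) (fun x hx => ?_)
    have : ¬ q ≤ η x := hx.2
    rw [abs_of_nonpos (by linarith), neg_sub]
  have hconst2 : ∀ A : Set 𝒳, ∫ x in A, (q - η x) ∂μ = q * (μ A).toReal - ∫ x in A, η x ∂μ := by
    intro A
    rw [integral_sub (integrable_const q).integrableOn hηint.integrableOn, setIntegral_const,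
      smul_eq_mul, Measure.real]
    ring
  -- integral over the symmetric difference
  have hDint : ∫ x in D, |η x - q| ∂μ
      = (∫ x in C \ Cs, |η x - q| ∂μ) + ∫ x in Cs \ C, |η x - q| ∂μ := by
    rw [hDeq]
    exact setIntegral_union disjoint_sdiff_sdiff (hCstar.diff hC)
      hfint.integrableOn hfint.integrableOn
  have hDmass : (μ D).toReal = (μ (C \ Cs)).toReal + (μ (Cs \ C)).toReal := by
    rw [hDeq]
    exact toReal_union_disjoint μ (hCstar.diff hC) disjoint_sdiff_sdiff
  -- the excess-risk identity
  set E : ℝ := errSet P X Y C - errSet P X Y Cs with hEdef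
  have hexcess : E = 2 * ∫ x in D, |η x - q| ∂μ := by
    have e1 := errFormula C hC
    have e2 := errFormula Cs hCstar
    have k1 : ∫ x in Cs \ C, |η x - q| ∂μ
        = (∫ x in Cs \ C, η x ∂μ) - q * (μ (Cs \ C)).toReal := by
      rw [← hsign1, hconst]
    have k2 : ∫ x in C \ Cs, |η x - q| ∂μ
        = q * (μ (C \ Cs)).toReal - ∫ x in C \ Cs, η x ∂μ := by
      rw [← hsign2, hconst2]
    rw [hEdef, e1, e2, hmassC, hmassCs, hDint, k1, k2, hsplitC, hsplitCs, hwings]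
    ring
  -- nonnegativity facts
  have hDintnn : 0 ≤ ∫ x in D, |η x - q| ∂μ :=
    setIntegral_nonneg hD (fun x _ => abs_nonneg _)
  have hEnn : 0 ≤ E := by rw [hexcess]; linarith
  set d : ℝ := (μ D).toReal with hddef
  have hdnn : 0 ≤ d := ENNReal.toReal_nonneg
  rcases eq_or_lt_of_le hdnn with hd0 | hdpos
  · -- trivial case d = 0
    rw [← hd0]
    positivity
  · -- main case d > 0
    set β : ℝ := α / (1 - α) with hβdef
    have hβpos : 0 < β := div_pos hα0 hα1'
    set t : ℝ := (d / (2 * B)) ^ ((1 - α) / α) with htdef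
    have hbase : 0 < d / (2 * B) := div_pos hdpos (by linarith)
    have htpos : 0 < t := Real.rpow_pos_of_pos hbase _
    have htβ : t ^ β = d / (2 * B) := by
      have hmul : (1 - α) / α * β = 1 := by rw [hβdef]; field_simp
      rw [htdef, ← Real.rpow_mul hbase.le, hmul, Real.rpow_one]
    have hBtβ : B * t ^ β = d / 2 := by
      rw [htβ]; field_simp
    -- truncated set
    set E1 : Set 𝒳 := D ∩ {x | t < |η x - q|} with hE1def
    have hfmeas : Measurable fun x => |η x - q| := (hηm.sub measurable_const).abs
    have hE1 : MeasurableSet E1 := hD.inter (measurableSet_lt measurable_const hfmeas)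
    have mono1 : ∫ x in E1, |η x - q| ∂μ ≤ ∫ x in D, |η x - q| ∂μ := by
      refine setIntegral_mono_set hfint.integrableOn ?_ ?_
      · filter_upwards with x using abs_nonneg _
      · exact HasSubset.Subset.eventuallyLE Set.inter_subset_left
    have mono2 : t * (μ E1).toReal ≤ ∫ x in E1, |η x - q| ∂μ :=
      setIntegral_ge_of_const_le_real hE1 (measure_ne_top μ E1)
        (fun x hx => le_of_lt hx.2) hfint.integrableOn
    have hsub : D ⊆ E1 ∪ {x | |η x - q| ≤ t} := by
      intro x hx
      by_cases h : t < |η x - q|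
      · exact Or.inl ⟨hx, h⟩
      · exact Or.inr (le_of_not_gt h)
    have hmeasbd : d ≤ (μ E1).toReal + (μ {x | |η x - q| ≤ t}).toReal := by
      have h1 : μ D ≤ μ E1 + μ {x | |η x - q| ≤ t} :=
        le_trans (measure_mono hsub) (measure_union_le _ _)
      have h2 := ENNReal.toReal_mono
        (by exact ENNReal.add_ne_top.2 ⟨measure_ne_top μ _, measure_ne_top μ _⟩) h1
      rwa [ENNReal.toReal_add (measure_ne_top μ _) (measure_ne_top μ _)] at h2
    have hnoiset := hnoise t htpos.le
    have hE1bd : d - d / 2 ≤ (μ E1).toReal := by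
      have : (μ {x | |η x - q| ≤ t}).toReal ≤ d / 2 := by rw [← hBtβ]; exact hnoiset
      linarith
    have hkey : t * d ≤ E := by
      have c1 : t * (d - d / 2) ≤ t * (μ E1).toReal :=
        mul_le_mul_of_nonneg_left hE1bd htpos.le
      have c2 : t * (d - d / 2) ≤ ∫ x in D, |η x - q| ∂μ :=
        le_trans c1 (le_trans mono2 mono1)
      rw [hexcess]
      have : t * (d - d / 2) = t * d / 2 := by ring
      linarith
    -- conclude: d ≤ (2B)^{1-α} E^α
    have hEpos : 0 < E := lt_of_lt_of_le (by positivity) hkey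
    have hpow : (t * d) ^ α ≤ E ^ α :=
      Real.rpow_le_rpow (by positivity) hkey hα0.le
    have htd : (t * d) ^ α = d / (2 * B) ^ (1 - α) := by
      have hmul : (1 - α) / α * α = 1 - α := by field_simp
      rw [Real.mul_rpow htpos.le hdnn, htdef, ← Real.rpow_mul hbase.le, hmul]
      rw [Real.div_rpow hdnn (by linarith : (0:ℝ) ≤ 2 * B)]
      rw [div_mul_eq_mul_div, ← Real.rpow_add hdpos]
      norm_num
    rw [htd] at hpow
    have h2B : (0:ℝ) < (2 * B) ^ (1 - α) := Real.rpow_pos_of_pos (by linarith) _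
    calc (μ D).toReal = d := rfl
      _ ≤ (2 * B) ^ (1 - α) * E ^ α := by
          rw [div_le_iff₀ h2B] at hpow
          linarith [hpow]

end LocalRanking
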